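/- For every sequence (a_n)_{n∈ℕ} of real numbers there exists a smooth function f ∈ C^∞([0,1],ℝ) such that for every n ∈ ℕ the n-th derivative of f at the point 1 − 2^{-n} equals a_n, i.e., f^{(n)}(1 − 2^{-n}) = a_n for all n ≥ 0. -/

import Mathlib

open Set Metric Filter Nat


private lemma aux_idwithin_eq {f : ℝ → ℝ} {s : Set ℝ} {x : ℝ} (n : ℕ)
    (hf : ContDiff ℝ (⊤ : ℕ∞) f) (hs : UniqueDiffOn ℝ s) (hx : x ∈ s) :
    iteratedDerivWithin n f s x = iteratedDeriv n f x := by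
  rw [iteratedDerivWithin_eq_iteratedFDerivWithin, iteratedDeriv_eq_iteratedFDeriv]
  congr 1
  exact (((contDiff_iff_ftaylorSeries.mp hf).hasFTaylorSeriesUpToOn s).eq_iteratedFDerivWithin_of_uniqueDiffOn
    (by exact_mod_cast le_top) hs hx).symm

private lemma aux_const_mul {k : ℕ} {f : ℝ → ℝ} (hf : ContDiff ℝ (k : ℕ) f) (c : ℝ) (x : ℝ) :
    iteratedDeriv k (fun y => c * f y) x = c * iteratedDeriv k f x := by
  have h1 : (fun y => c * f y) = c • f := by funext y; simp
  rw [iteratedDeriv_eq_iteratedFDeriv, iteratedDeriv_eq_iteratedFDeriv, h1,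
    iteratedFDeriv_const_smul_apply hf.contDiffAt]
  simp

private lemma aux_pow (n : ℕ) (x : ℝ) : iteratedDeriv n (fun y : ℝ => y ^ n) x = (n ! : ℝ) := by
  induction n generalizing x with
  | zero => simp
  | succ n ih =>
    rw [iteratedDeriv_succ']
    have h1 : deriv (fun y : ℝ => y ^ (n+1)) = fun y => ((n:ℝ)+1) * y ^ n := by
      funext y; simp [deriv_pow]
    rw [h1, aux_const_mul (f := fun y : ℝ => y ^ n) (by exact contDiff_id.pow n), ih x, Nat.factorial_succ]
    push_cast; ring

private lemma aux_pow_sub (n : ℕ) (c : ℝ) :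
    iteratedDeriv n (fun y : ℝ => (y - c) ^ n) c = (n ! : ℝ) := by
  have h : (fun y : ℝ => (y - c) ^ n) = fun z : ℝ => (fun y : ℝ => y ^ n) (z + -c) := by
    funext z; ring_nf
  rw [h, iteratedDeriv_comp_add_const n (fun y : ℝ => y ^ n) (-c)]
  exact aux_pow n _

private lemma aux_affine {f : ℝ → ℝ} (hf : ContDiff ℝ (⊤:ℕ∞) f) (k : ℕ) (d e x : ℝ) :
    iteratedDeriv k (fun y => f (d * y + e)) x = d ^ k * iteratedDeriv k f (d * x + e) := by
  have hg : ContDiff ℝ (k : ℕ) (fun z : ℝ => f (z + e)) :=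
    (hf.of_le (by exact_mod_cast le_top)).comp (contDiff_id.add contDiff_const)
  have h2 := iteratedDeriv_comp_const_mul hg d
  have h3 := iteratedDeriv_comp_add_const k f e
  calc iteratedDeriv k (fun y => f (d * y + e)) x
      = iteratedDeriv k (fun y => (fun z : ℝ => f (z + e)) (d * y)) x := rfl
    _ = d ^ k * iteratedDeriv k (fun z : ℝ => f (z + e)) (d * x) := by rw [h2]
    _ = d ^ k * iteratedDeriv k f (d * x + e) := by rw [h3]

private noncomputable def myχ : ContDiffBump (0:ℝ) := ⟨2⁻¹, 1, by norm_num, by norm_num⟩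

private noncomputable def myh (n : ℕ) : ℝ → ℝ := fun y => myχ y * y ^ n

private lemma myh_contDiff (n : ℕ) : ContDiff ℝ (⊤:ℕ∞) (myh n) :=
  myχ.contDiff.mul (contDiff_id.pow n)

private lemma myh_compact (n : ℕ) : HasCompactSupport (myh n) :=
  myχ.hasCompactSupport.mul_right

private lemma myh_bound (n k : ℕ) : ∃ C : ℝ, ∀ y : ℝ, |iteratedDeriv k (myh n) y| ≤ C := by
  have h1 : HasCompactSupport (iteratedDeriv k (myh n)) := by
    rw [iteratedDeriv_eq_equiv_comp]
    exact ((myh_compact n).iteratedFDeriv k).comp_left (by simp)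
  have h2 : Continuous (iteratedDeriv k (myh n)) := by
    rw [iteratedDeriv_eq_equiv_comp]
    exact (LinearIsometryEquiv.continuous _).comp
      ((myh_contDiff n).continuous_iteratedFDeriv (by exact_mod_cast le_top))
  obtain ⟨C, hC⟩ := h2.bounded_above_of_compact_support h1
  exact ⟨C, fun y => by simpa [Real.norm_eq_abs] using hC y⟩

private noncomputable def myM (n k : ℕ) : ℝ := (myh_bound n k).choose

private lemma myM_spec (n k : ℕ) (y : ℝ) : |iteratedDeriv k (myh n) y| ≤ myM n k :=
  (myh_bound n k).choose_spec y

private lemma myM_nonneg (n k : ℕ) : 0 ≤ myM n k :=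
  le_trans (abs_nonneg _) (myM_spec n k 0)

private noncomputable def myK (n : ℕ) : ℝ := (∑ j ∈ Finset.range (n+1), |myM n j|) + 1

private lemma myK_one_le (n : ℕ) : 1 ≤ myK n := by
  have : 0 ≤ ∑ j ∈ Finset.range (n+1), |myM n j| :=
    Finset.sum_nonneg fun j _ => abs_nonneg _
  simp only [myK]; linarith

private lemma myK_pos (n : ℕ) : 0 < myK n := lt_of_lt_of_le one_pos (myK_one_le n)

private lemma myM_le_myK (n k : ℕ) (hk : k ≤ n) : myM n k ≤ myK n := by
  have h1 : myM n k ≤ |myM n k| := le_abs_self _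
  have h2 : |myM n k| ≤ ∑ j ∈ Finset.range (n+1), |myM n j| :=
    Finset.single_le_sum (fun j _ => abs_nonneg (myM n j)) (Finset.mem_range.mpr (by omega))
  simp only [myK]; linarith

private noncomputable def myδ (a : ℕ → ℝ) (n : ℕ) : ℝ :=
  min ((2⁻¹:ℝ)^(n+3)) ((2⁻¹:ℝ)^n / ((|a n| + 1) * myK n))

private lemma myδ_pos (a : ℕ → ℝ) (n : ℕ) : 0 < myδ a n := by
  apply lt_min (by positivity)
  apply _root_.div_pos (by positivity)
  have := myK_pos n
  positivity

private lemma myδ_le (a : ℕ → ℝ) (n : ℕ) : myδ a n ≤ (2⁻¹:ℝ)^(n+3) := min_le_left _ _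

private lemma myδ_le_one (a : ℕ → ℝ) (n : ℕ) : myδ a n ≤ 1 :=
  le_trans (myδ_le a n) (pow_le_one₀ (by norm_num) (by norm_num))

private lemma myδ_mul_le (a : ℕ → ℝ) (n : ℕ) :
    (|a n| + 1) * myK n * myδ a n ≤ (2⁻¹:ℝ)^n := by
  have h1 : (0:ℝ) < (|a n| + 1) * myK n := by have := myK_pos n; positivity
  have h2 : myδ a n ≤ (2⁻¹:ℝ)^n / ((|a n| + 1) * myK n) := min_le_right _ _
  calc (|a n| + 1) * myK n * myδ a n
      ≤ (|a n| + 1) * myK n * ((2⁻¹:ℝ)^n / ((|a n| + 1) * myK n)) := by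
        exact mul_le_mul_of_nonneg_left h2 h1.le
    _ = (2⁻¹:ℝ)^n := by have := (myK_pos n).ne'; field_simp

private noncomputable def myc (n : ℕ) : ℝ := 1 - (2⁻¹:ℝ)^n

private noncomputable def myF (a : ℕ → ℝ) (n : ℕ) : ℝ → ℝ := fun x =>
  (a n * myδ a n ^ n / (n ! : ℝ)) * myh n ((myδ a n)⁻¹ * x + (-(myc n) * (myδ a n)⁻¹))

private lemma myF_contDiff (a : ℕ → ℝ) (n : ℕ) : ContDiff ℝ (⊤:ℕ∞) (myF a n) :=
  contDiff_const.mul ((myh_contDiff n).comp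
    ((contDiff_const.mul contDiff_id).add contDiff_const))
private lemma myF_deriv (a : ℕ → ℝ) (n k : ℕ) (x : ℝ) :
    iteratedDeriv k (myF a n) x = (a n * myδ a n ^ n / (n ! : ℝ)) *
      ((myδ a n)⁻¹ ^ k *
        iteratedDeriv k (myh n) ((myδ a n)⁻¹ * x + (-(myc n) * (myδ a n)⁻¹))) := by
  have h1 : ContDiff ℝ (k:ℕ)
      (fun y : ℝ => myh n ((myδ a n)⁻¹ * y + (-(myc n) * (myδ a n)⁻¹))) :=
    ((myh_contDiff n).of_le (by exact_mod_cast le_top)).comp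
      ((contDiff_const.mul contDiff_id).add contDiff_const)
  have hFdef : myF a n = fun x => (a n * myδ a n ^ n / (n ! : ℝ)) *
      myh n ((myδ a n)⁻¹ * x + (-(myc n) * (myδ a n)⁻¹)) := rfl
  rw [hFdef, aux_const_mul h1, aux_affine (myh_contDiff n) k]

private lemma myF_bound (a : ℕ → ℝ) (k n : ℕ) (hkn : k < n) (x : ℝ) :
    ‖iteratedFDeriv ℝ k (myF a n) x‖ ≤ (2⁻¹:ℝ)^n := by
  rw [norm_iteratedFDeriv_eq_norm_iteratedDeriv, Real.norm_eq_abs, myF_deriv]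
  set δ := myδ a n with hδdef
  have hδ : 0 < δ := myδ_pos a n
  set y := δ⁻¹ * x + (-(myc n) * δ⁻¹) with hy
  set E := |iteratedDeriv k (myh n) y| with hE
  have e1 : |a n * δ ^ n / (n ! : ℝ) * (δ⁻¹ ^ k * iteratedDeriv k (myh n) y)|
      = |a n| * δ ^ n / (n ! : ℝ) * (δ⁻¹ ^ k * E) := by
    rw [abs_mul, abs_mul, abs_div, abs_mul, abs_pow, abs_pow, abs_inv, abs_of_pos hδ,
      Nat.abs_cast]
  rw [e1]
  have hE0 : 0 ≤ E := abs_nonneg _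
  have hEK : E ≤ myK n := le_trans (myM_spec n k y) (myM_le_myK n k hkn.le)
  have hfact : (1:ℝ) ≤ (n ! : ℝ) := by exact_mod_cast Nat.one_le_iff_ne_zero.mpr n.factorial_ne_zero
  have hpow : δ ^ n * δ⁻¹ ^ k = δ ^ (n - k) := by
    rw [pow_sub₀ δ hδ.ne' hkn.le, inv_pow]
  have hd1 : δ ^ (n - k) ≤ δ := by
    calc δ ^ (n-k) ≤ δ ^ 1 := pow_le_pow_of_le_one hδ.le (myδ_le_one a n) (by omega)
    _ = δ := pow_one δ
  have key := myδ_mul_le a n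
  have c1 : |a n| * δ ^ n / (n ! : ℝ) ≤ |a n| * δ ^ n :=
    div_le_self (by positivity) hfact
  calc |a n| * δ ^ n / (n ! : ℝ) * (δ⁻¹ ^ k * E)
      ≤ (|a n| * δ ^ n) * (δ⁻¹ ^ k * E) := by
        apply mul_le_mul_of_nonneg_right c1 (by positivity)
    _ = |a n| * (δ ^ (n - k) * E) := by rw [← hpow]; ring
    _ ≤ |a n| * (δ * myK n) := by
        apply mul_le_mul_of_nonneg_left _ (abs_nonneg _)
        exact mul_le_mul hd1 hEK hE0 hδ.le
    _ ≤ (|a n| + 1) * myK n * δ := by nlinarith [myK_pos n, hδ, abs_nonneg (a n)]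
    _ ≤ (2⁻¹:ℝ)^n := key

private lemma dist_bound {m n : ℕ} (hmn : m ≠ n) {x : ℝ}
    (hx : |x - myc n| < (2⁻¹:ℝ)^(n+2)) : (2⁻¹:ℝ)^(m+3) ≤ |x - myc m| := by
  have tri : |myc n - myc m| ≤ |myc n - x| + |x - myc m| := abs_sub_le _ _ _
  have hcc : myc n - myc m = (2⁻¹:ℝ)^m - (2⁻¹:ℝ)^n := by simp only [myc]; ring
  rw [abs_sub_comm (myc n) x] at tri
  have p1 : (0:ℝ) < (2⁻¹:ℝ)^m := by positivity
  have p2 : (0:ℝ) < (2⁻¹:ℝ)^n := by positivity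
  rcases lt_or_gt_of_ne hmn with h | h
  · -- m < n
    have e1 : (2⁻¹:ℝ)^n ≤ 2⁻¹^(m+1) :=
      pow_le_pow_of_le_one (by norm_num) (by norm_num) (by omega)
    have e2 : (2⁻¹:ℝ)^(n+2) ≤ 2⁻¹^(m+3) :=
      pow_le_pow_of_le_one (by norm_num) (by norm_num) (by omega)
    have e3 : (2⁻¹:ℝ)^(m+1) = 2⁻¹^m * 2⁻¹ := pow_succ _ _
    have e4 : (2⁻¹:ℝ)^(m+3) = 2⁻¹^m * 8⁻¹ := by rw [pow_add]; norm_num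
    have habs : |myc n - myc m| = (2⁻¹:ℝ)^m - (2⁻¹:ℝ)^n := by
      rw [hcc, abs_of_nonneg (by linarith)]
    linarith
  · -- n < m
    have e1 : (2⁻¹:ℝ)^m ≤ 2⁻¹^(n+1) :=
      pow_le_pow_of_le_one (by norm_num) (by norm_num) (by omega)
    have e2 : (2⁻¹:ℝ)^(m+3) ≤ 2⁻¹^(n+2) :=
      pow_le_pow_of_le_one (by norm_num) (by norm_num) (by omega)
    have e3 : (2⁻¹:ℝ)^(n+1) = 2⁻¹^n * 2⁻¹ := pow_succ _ _
    have e4 : (2⁻¹:ℝ)^(n+2) = 2⁻¹^n * 4⁻¹ := by rw [pow_add]; norm_num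
    have habs : |myc n - myc m| = (2⁻¹:ℝ)^n - (2⁻¹:ℝ)^m := by
      rw [hcc, abs_of_nonpos (by linarith)]; ring
    linarith

private lemma myF_eq_zero (a : ℕ → ℝ) (m : ℕ) {x : ℝ} (hx : myδ a m ≤ |x - myc m|) :
    myF a m x = 0 := by
  have hδ := myδ_pos a m
  have hχ : myχ ((myδ a m)⁻¹ * x + (-(myc m) * (myδ a m)⁻¹)) = 0 := by
    apply myχ.zero_of_le_dist
    have e : (myδ a m)⁻¹ * x + (-(myc m) * (myδ a m)⁻¹) = (x - myc m) * (myδ a m)⁻¹ := by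
      ring
    have hrOut : myχ.rOut = 1 := rfl
    rw [e, hrOut, Real.dist_eq, sub_zero, abs_mul, abs_inv, abs_of_pos hδ,
      ← div_eq_mul_inv, le_div_iff₀ hδ, one_mul]
    exact hx
  have hdef : myF a m x = (a m * myδ a m ^ m / (m ! : ℝ)) *
      (myχ ((myδ a m)⁻¹ * x + (-(myc m) * (myδ a m)⁻¹)) *
        ((myδ a m)⁻¹ * x + (-(myc m) * (myδ a m)⁻¹)) ^ m) := rfl
  rw [hdef, hχ]; ring

private lemma myF_eq_poly (a : ℕ → ℝ) (n : ℕ) {x : ℝ} (hx : |x - myc n| ≤ myδ a n / 2) :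
    myF a n x = a n / (n ! : ℝ) * (x - myc n)^n := by
  have hδ := myδ_pos a n
  have hχ : myχ ((myδ a n)⁻¹ * x + (-(myc n) * (myδ a n)⁻¹)) = 1 := by
    apply myχ.one_of_mem_closedBall
    have e : (myδ a n)⁻¹ * x + (-(myc n) * (myδ a n)⁻¹) = (x - myc n) * (myδ a n)⁻¹ := by
      ring
    have hrIn : myχ.rIn = 2⁻¹ := rfl
    rw [Metric.mem_closedBall, e, hrIn, Real.dist_eq, sub_zero, abs_mul, abs_inv,
      abs_of_pos hδ, ← div_eq_mul_inv, div_le_iff₀ hδ]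
    linarith
  have e : (myδ a n)⁻¹ * x + (-(myc n) * (myδ a n)⁻¹) = (x - myc n) * (myδ a n)⁻¹ := by ring
  have hdef : myF a n x = (a n * myδ a n ^ n / (n ! : ℝ)) *
      (myχ ((myδ a n)⁻¹ * x + (-(myc n) * (myδ a n)⁻¹)) *
        ((myδ a n)⁻¹ * x + (-(myc n) * (myδ a n)⁻¹)) ^ n) := rfl
  rw [hdef, hχ, one_mul, e, mul_pow, inv_pow]
  have hne : (myδ a n) ^ n ≠ 0 := pow_ne_zero _ hδ.ne'
  field_simp
/-- For every sequence `(a n)` of real numbers there is a smooth function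
`f ∈ C^∞([0,1],ℝ)` with `f⁽ⁿ⁾(1 - 2⁻ⁿ) = a n` for all `n ≥ 0`, where derivatives are
taken within `[0,1]`. -/
theorem stmt10 (a : ℕ → ℝ) :
    ∃ f : ℝ → ℝ, ContDiffOn ℝ (⊤ : ℕ∞) f (Set.Icc (0:ℝ) 1) ∧
      ∀ n : ℕ, iteratedDerivWithin n f (Set.Icc (0:ℝ) 1) (1 - 2⁻¹ ^ n) = a n := by
  classical
  set f : ℝ → ℝ := fun x => ∑' m, myF a m x with hfdef
  have hsmooth : ContDiff ℝ (⊤:ℕ∞) f := by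
    apply contDiff_tsum_of_eventually (fun n => myF_contDiff a n)
      (v := fun k n => (2⁻¹:ℝ)^n)
    · intro k _
      exact summable_geometric_of_lt_one (by norm_num) (by norm_num)
    · intro k _
      refine Filter.eventually_cofinite.mpr ((Set.finite_Iic k).subset ?_)
      intro n hn
      rw [Set.mem_Iic]
      by_contra hk
      push_neg at hk
      exact hn (myF_bound a k n hk)
  have huni : UniqueDiffOn ℝ (Set.Icc (0:ℝ) 1) := uniqueDiffOn_Icc (by norm_num)
  refine ⟨f, hsmooth.contDiffOn, ?_⟩
  intro n
  have hq1 : (2⁻¹:ℝ)^n ≤ 1 := pow_le_one₀ (by norm_num) (by norm_num)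
  have hq0 : (0:ℝ) < (2⁻¹:ℝ)^n := by positivity
  have hmem : (1 - (2⁻¹:ℝ)^n) ∈ Set.Icc (0:ℝ) 1 := ⟨by linarith, by linarith⟩
  have hc : (1 : ℝ) - 2⁻¹ ^ n = myc n := rfl
  rw [hc] at hmem ⊢
  rw [aux_idwithin_eq n hsmooth huni hmem]
  set ρ : ℝ := min (myδ a n / 2) ((2⁻¹:ℝ)^(n+2)) with hρdef
  have hρ : 0 < ρ := lt_min (by have := myδ_pos a n; linarith) (by positivity)
  have heq : f =ᶠ[nhds (myc n)] fun x => a n / (n ! : ℝ) * (x - myc n)^n := by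
    filter_upwards [Metric.ball_mem_nhds (myc n) hρ] with x hx
    rw [Metric.mem_ball, Real.dist_eq] at hx
    have hx1 : |x - myc n| ≤ myδ a n / 2 := le_of_lt (lt_of_lt_of_le hx (min_le_left _ _))
    have hx2 : |x - myc n| < (2⁻¹:ℝ)^(n+2) := lt_of_lt_of_le hx (min_le_right _ _)
    have hzero : ∀ m, m ≠ n → myF a m x = 0 := fun m hm =>
      myF_eq_zero a m (le_trans (myδ_le a m) (dist_bound hm hx2))
    calc f x = myF a n x := tsum_eq_single n hzero
      _ = a n / (n ! : ℝ) * (x - myc n)^n := myF_eq_poly a n hx1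
  rw [heq.iteratedDeriv_eq]
  rw [aux_const_mul (f := fun x => (x - myc n)^n)
      (by exact (contDiff_id.sub contDiff_const).pow n) _ _,
    aux_pow_sub n (myc n)]
  have hne : (n ! : ℝ) ≠ 0 := Nat.cast_ne_zero.mpr n.factorial_ne_zero
  field_simp
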